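/- Let σ be a non-decreasing sigmoidal function with σ(x) - 1/2 odd, σ ∈ C² concave for x ≥ 0, and σ(1) < 1. Then for every x in a compact interval [a,b] and every n ∈ ℕ with ⌈na⌉ ≤ ⌊nb⌋ - 1, one has Σ_{k=⌈na⌉}^{⌊nb⌋-1} φ_σ(nx - k) ≥ φ_σ(2) > 0, where φ_σ(x) = (σ(x+1)-σ(x-1))/2. -/

import Mathlib

open Filter

/-- The density function generated by a sigmoidal function. -/
noncomputable def phiSigma (σ : ℝ → ℝ) (x : ℝ) : ℝ := (σ (x + 1) - σ (x - 1)) / 2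

private lemma sigma_neg {σ : ℝ → ℝ} (hodd : ∀ x : ℝ, σ (-x) - 1 / 2 = -(σ x - 1 / 2))
    (x : ℝ) : σ (-x) = 1 - σ x := by have := hodd x; linarith

private lemma phi_even {σ : ℝ → ℝ} (hodd : ∀ x : ℝ, σ (-x) - 1 / 2 = -(σ x - 1 / 2))
    (t : ℝ) : phiSigma σ (-t) = phiSigma σ t := by
  unfold phiSigma
  have h1 : σ (-t + 1) = 1 - σ (t - 1) := by
    have := sigma_neg hodd (t - 1); rw [show -(t-1) = -t + 1 by ring] at this; linarith
  have h2 : σ (-t - 1) = 1 - σ (t + 1) := by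
    have := sigma_neg hodd (t + 1); rw [show -(t+1) = -t - 1 by ring] at this; linarith
  rw [h1, h2]; ring

private lemma phi_nonneg {σ : ℝ → ℝ} (hmono : Monotone σ) (t : ℝ) :
    0 ≤ phiSigma σ t := by
  have := hmono (show t - 1 ≤ t + 1 by linarith)
  unfold phiSigma; linarith

/-- key lemma: φ_σ(t) ≥ φ_σ(2) for |t| ≤ 2. -/
private lemma phi_key {σ : ℝ → ℝ} (hodd : ∀ x : ℝ, σ (-x) - 1 / 2 = -(σ x - 1 / 2))
    (hconc : ConcaveOn ℝ (Set.Ici 0) σ) :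
    ∀ t : ℝ, |t| ≤ 2 → phiSigma σ 2 ≤ phiSigma σ t := by
  have main : ∀ t : ℝ, 0 ≤ t → t ≤ 2 → phiSigma σ 2 ≤ phiSigma σ t := by
    intro t ht0 ht2
    unfold phiSigma
    rw [show (2:ℝ) + 1 = 3 by norm_num, show (2:ℝ) - 1 = 1 by norm_num]
    -- goal: (σ 3 - σ 1)/2 ≤ (σ (t+1) - σ (t-1))/2
    rcases le_or_gt 1 t with hcase | hcase
    · -- t ∈ [1,2]: use concavity with points t-1 and 3, coefficients λ = 2/(4-t)
      have hd : (0:ℝ) < 4 - t := by linarith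
      set l : ℝ := 2 / (4 - t) with hl
      have hl0 : 0 ≤ l := by positivity
      have hl1 : l ≤ 1 := by rw [hl, div_le_one hd]; linarith
      have hm1 : t - 1 ∈ Set.Ici (0:ℝ) := by simp; linarith
      have hm3 : (3:ℝ) ∈ Set.Ici (0:ℝ) := by norm_num
      have c1 := hconc.2 hm1 hm3 hl0 (by linarith : (0:ℝ) ≤ 1 - l) (by ring)
      have c2 := hconc.2 hm1 hm3 (by linarith : (0:ℝ) ≤ 1 - l) hl0 (by ring)
      rw [smul_eq_mul, smul_eq_mul, smul_eq_mul, smul_eq_mul] at c1 c2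
      have e1 : l * (t - 1) + (1 - l) * 3 = 1 := by
        rw [hl]; field_simp; ring
      have e2 : (1 - l) * (t - 1) + l * 3 = t + 1 := by
        rw [hl]; field_simp; ring
      rw [e1] at c1
      rw [e2] at c2
      rw [hl] at c1 c2
      linarith [c1, c2]
    · -- t ∈ [0,1): reflect σ (t-1) = 1 - σ (1-t)
      have hrefl : σ (t - 1) = 1 - σ (1 - t) := by
        have := sigma_neg hodd (1 - t); rw [show -(1-t) = t - 1 by ring] at this; linarith
      have h0 : σ 0 = 1 / 2 := by have := hodd 0; simp at this; linarith
      -- fact A: σ(1-t) + σ(1+t) ≥ σ 0 + σ 2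
      have hm0 : (0:ℝ) ∈ Set.Ici (0:ℝ) := by norm_num
      have hm2 : (2:ℝ) ∈ Set.Ici (0:ℝ) := by norm_num
      set l : ℝ := (1 + t) / 2 with hl
      have hl0 : 0 ≤ l := by positivity
      have hl1 : l ≤ 1 := by rw [hl]; linarith
      have a1 := hconc.2 hm0 hm2 hl0 (by linarith : (0:ℝ) ≤ 1 - l) (by ring)
      have a2 := hconc.2 hm0 hm2 (by linarith : (0:ℝ) ≤ 1 - l) hl0 (by ring)
      rw [smul_eq_mul, smul_eq_mul, smul_eq_mul, smul_eq_mul] at a1 a2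
      have e1 : l * 0 + (1 - l) * 2 = 1 - t := by rw [hl]; ring
      have e2 : (1 - l) * 0 + l * 2 = t + 1 := by rw [hl]; ring
      rw [e1] at a1; rw [e2] at a2; rw [hl] at a1 a2
      -- fact B: σ 1 + σ 2 ≥ σ 0 + σ 3
      have hm3 : (3:ℝ) ∈ Set.Ici (0:ℝ) := by norm_num
      have b1 := hconc.2 hm0 hm3 (by norm_num : (0:ℝ) ≤ 2/3) (by norm_num : (0:ℝ) ≤ 1/3)
        (by norm_num)
      have b2 := hconc.2 hm0 hm3 (by norm_num : (0:ℝ) ≤ 1/3) (by norm_num : (0:ℝ) ≤ 2/3)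
        (by norm_num)
      rw [smul_eq_mul, smul_eq_mul, smul_eq_mul, smul_eq_mul] at b1 b2
      norm_num at b1 b2
      rw [hrefl]
      linarith [a1, a2, b1, b2]
  intro t ht
  rcases le_or_gt 0 t with h | h
  · exact main t h (by rw [abs_of_nonneg h] at ht; exact ht)
  · rw [← phi_even hodd t]
    exact main (-t) (by linarith) (by rw [abs_of_neg h] at ht; linarith)

/-- for a non-decreasing sigmoidal `σ` with `σ x - 1/2` odd, `σ ∈ C²` concave
on `[0,∞)` and `σ(1) < 1`, for every `x ∈ [a,b]` and `n` with `⌈na⌉ ≤ ⌊nb⌋ - 1`, one has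
`Σ_{k=⌈na⌉}^{⌊nb⌋-1} φ_σ(nx - k) ≥ φ_σ(2) > 0`. -/
theorem stmt_3 (σ : ℝ → ℝ) (hmeas : Measurable σ) (hmono : Monotone σ)
    (h0 : Tendsto σ atBot (nhds 0)) (h1 : Tendsto σ atTop (nhds 1))
    (hodd : ∀ x : ℝ, σ (-x) - 1 / 2 = -(σ x - 1 / 2))
    (hC2 : ContDiff ℝ 2 σ) (hconc : ConcaveOn ℝ (Set.Ici 0) σ)
    (hσ1 : σ 1 < 1)
    (a b : ℝ) (hab : a < b) (n : ℕ)
    (hn : ⌈(n : ℝ) * a⌉ ≤ ⌊(n : ℝ) * b⌋ - 1)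
    (x : ℝ) (hx : x ∈ Set.Icc a b) :
    0 < phiSigma σ 2 ∧
      phiSigma σ 2 ≤
        ∑ k ∈ Finset.Icc ⌈(n : ℝ) * a⌉ (⌊(n : ℝ) * b⌋ - 1),
          phiSigma σ ((n : ℝ) * x - (k : ℝ)) := by
  -- positivity of φ_σ(2)
  have hpos : 0 < phiSigma σ 2 := by
    have h31 : σ 1 < σ 3 := by
      by_contra hcon
      push_neg at hcon
      -- then σ t ≤ σ 1 for all t ≥ 3
      have hbound : ∀ t : ℝ, 3 ≤ t → σ t ≤ σ 1 := by
        intro t ht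
        have hd : (0:ℝ) < t - 1 := by linarith
        have hb : (0:ℝ) < 2 / (t - 1) := by positivity
        have hb1 : 2 / (t - 1) ≤ 1 := by rw [div_le_one hd]; linarith
        have c := hconc.2 (show (1:ℝ) ∈ Set.Ici 0 by norm_num)
          (show t ∈ Set.Ici (0:ℝ) by simp; linarith)
          (by linarith : (0:ℝ) ≤ 1 - 2 / (t - 1)) hb.le (by ring)
        rw [smul_eq_mul, smul_eq_mul, smul_eq_mul, smul_eq_mul] at c
        have e : (1 - 2 / (t - 1)) * 1 + 2 / (t - 1) * t = 3 := by
          field_simp; ring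
        rw [e] at c
        -- c : (1 - 2/(t-1)) * σ 1 + 2/(t-1) * σ t ≤ σ 3 ≤ σ 1
        have key : 2 / (t - 1) * σ t ≤ 2 / (t - 1) * σ 1 := by linarith
        exact le_of_mul_le_mul_left key hb
      have : (1:ℝ) ≤ σ 1 :=
        le_of_tendsto h1 (eventually_atTop.2 ⟨3, fun t ht => hbound t ht⟩)
      linarith
    unfold phiSigma
    norm_num
    linarith
  refine ⟨hpos, ?_⟩
  -- choose the index K
  set y : ℝ := (n : ℝ) * x with hy
  have hya : (n : ℝ) * a ≤ y := by
    exact mul_le_mul_of_nonneg_left hx.1 (Nat.cast_nonneg n)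
  have hyb : y ≤ (n : ℝ) * b := by
    exact mul_le_mul_of_nonneg_left hx.2 (Nat.cast_nonneg n)
  set K : ℤ := max ⌈(n : ℝ) * a⌉ (min (⌊(n : ℝ) * b⌋ - 1) ⌊y⌋) with hK
  have hKmem : K ∈ Finset.Icc ⌈(n : ℝ) * a⌉ (⌊(n : ℝ) * b⌋ - 1) := by
    rw [Finset.mem_Icc]
    constructor
    · exact le_max_left _ _
    · exact max_le hn (min_le_left _ _)
  have habs : |y - (K : ℝ)| ≤ 2 := by
    have hceil : (⌈(n : ℝ) * a⌉ : ℝ) < (n : ℝ) * a + 1 := by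
      exact_mod_cast Int.ceil_lt_add_one _
    have hfloorb : (n : ℝ) * b < (⌊(n : ℝ) * b⌋ : ℝ) + 1 := Int.lt_floor_add_one _
    have hfloory : (⌊y⌋ : ℝ) ≤ y := Int.floor_le _
    have hfloory2 : y < (⌊y⌋ : ℝ) + 1 := Int.lt_floor_add_one _
    -- upper bound: K ≤ y + 2
    have hup : (K : ℝ) ≤ y + 2 := by
      have h1 : K ≤ max ⌈(n : ℝ) * a⌉ ⌊y⌋ := max_le_max le_rfl (min_le_right _ _)
      have h2 : (max ⌈(n : ℝ) * a⌉ ⌊y⌋ : ℝ) ≤ y + 2 := by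
        apply max_le <;> linarith
      calc (K : ℝ) ≤ (max ⌈(n : ℝ) * a⌉ ⌊y⌋ : ℝ) := by exact_mod_cast h1
        _ ≤ y + 2 := h2
    -- lower bound: y - 2 ≤ K
    have hlo : y - 2 ≤ (K : ℝ) := by
      have h1 : min (⌊(n : ℝ) * b⌋ - 1) ⌊y⌋ ≤ K := le_max_right _ _
      have h2 : y - 2 ≤ (min (⌊(n : ℝ) * b⌋ - 1) ⌊y⌋ : ℝ) := by
        apply le_min <;> push_cast <;> linarith
      calc y - 2 ≤ (min (⌊(n : ℝ) * b⌋ - 1) ⌊y⌋ : ℝ) := h2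
        _ ≤ (K : ℝ) := by exact_mod_cast h1
    rw [abs_le]; constructor <;> linarith
  have hterm : phiSigma σ 2 ≤ phiSigma σ (y - (K : ℝ)) :=
    phi_key hodd hconc _ habs
  have hsum : phiSigma σ (y - (K : ℝ)) ≤
      ∑ k ∈ Finset.Icc ⌈(n : ℝ) * a⌉ (⌊(n : ℝ) * b⌋ - 1),
        phiSigma σ ((n : ℝ) * x - (k : ℝ)) := by
    have := Finset.single_le_sum
      (f := fun k : ℤ => phiSigma σ ((n : ℝ) * x - (k : ℝ)))
      (fun i _ => phi_nonneg hmono _) hKmem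
    simpa [hy] using this
  linarith
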